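/- arXiv:2506.21235 — 2 statements merged into one kernel-verified Lean document; each statement's English description precedes it below -/
import Mathlib

section
/- Let G be a graph without isolated vertices. Then γ_{gr}^{×2}(G) ≤ 2·γ_{gr}(G). -/
open SimpleGraph

variable {V : Type*}

/-- The closed neighborhood of a vertex. -/
def cnbr (G : SimpleGraph V) (v : V) : Set V := insert v (G.neighborSet v)

/-- The number of vertices in the list `l` that dominate `u` (i.e. whose closed
neighborhood contains `u`). -/
noncomputable def domCount (G : SimpleGraph V) (u : V) (l : List V) : ℕ :=
  {w | w ∈ l ∧ u ∈ cnbr G w}.ncard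

/-- A double neighborhood sequence (DNS): a sequence of distinct vertices in which each
vertex dominates some vertex dominated at most once by its predecessors. -/
def IsDNS (G : SimpleGraph V) (l : List V) : Prop :=
  l.Nodup ∧ ∀ i : Fin l.length, ∃ u ∈ cnbr G (l.get i), domCount G u (l.take i) ≤ 1

/-- A double dominating sequence (DDS): a DNS whose underlying set is doubly dominating. -/
def IsDDS (G : SimpleGraph V) (l : List V) : Prop :=
  IsDNS G l ∧ ∀ v, 2 ≤ domCount G v l

/-- The Grundy double domination number: maximum length of a DDS. -/
noncomputable def gddn (G : SimpleGraph V) : ℕ :=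
  sSup {n | ∃ l : List V, IsDDS G l ∧ l.length = n}

/-- The maximum double neighborhood number: maximum length of a DNS. -/
noncomputable def mdnn (G : SimpleGraph V) : ℕ :=
  sSup {n | ∃ l : List V, IsDNS G l ∧ l.length = n}

/-- A legal (Grundy domination) sequence. -/
def IsLegal (G : SimpleGraph V) (l : List V) : Prop :=
  l.Nodup ∧ ∀ i : Fin l.length, ∃ u ∈ cnbr G (l.get i), domCount G u (l.take i) = 0

/-- A dominating sequence: legal sequence whose underlying set dominates. -/
def IsDomSeq (G : SimpleGraph V) (l : List V) : Prop :=
  IsLegal G l ∧ ∀ v, 1 ≤ domCount G v l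

/-- The Grundy domination number: maximum length of a dominating sequence. -/
noncomputable def grundy (G : SimpleGraph V) : ℕ :=
  sSup {n | ∃ l : List V, IsDomSeq G l ∧ l.length = n}

/-- The double domination number: minimum size of a double dominating set. -/
noncomputable def ddomNum (G : SimpleGraph V) : ℕ :=
  sInf {n | ∃ D : Set V, (∀ v, 2 ≤ {w | w ∈ D ∧ v ∈ cnbr G w}.ncard) ∧ D.ncard = n}

/-! ### Auxiliary lemmas -/

lemma mem_cnbr_self (G : SimpleGraph V) (v : V) : v ∈ cnbr G v := Set.mem_insert _ _

lemma domCount_finite (G : SimpleGraph V) (u : V) (l : List V) :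
    {w | w ∈ l ∧ u ∈ cnbr G w}.Finite :=
  (l.finite_toSet).subset fun _ hw => hw.1

lemma domCount_mono (G : SimpleGraph V) {m m' : List V} (h : ∀ w, w ∈ m → w ∈ m') (u : V) :
    domCount G u m ≤ domCount G u m' :=
  Set.ncard_le_ncard (fun w hw => ⟨h w hw.1, hw.2⟩) (domCount_finite G u m')

lemma domCount_eq_zero_iff (G : SimpleGraph V) {u : V} {m : List V} :
    domCount G u m = 0 ↔ ∀ w ∈ m, u ∉ cnbr G w := by
  rw [domCount, Set.ncard_eq_zero (domCount_finite G u m),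
    Set.eq_empty_iff_forall_notMem]
  constructor
  · intro h w hw hc; exact h w ⟨hw, hc⟩
  · rintro h w ⟨hw, hc⟩; exact h w hw hc

lemma one_le_domCount (G : SimpleGraph V) {u w : V} {m : List V} (hw : w ∈ m)
    (hc : u ∈ cnbr G w) : 1 ≤ domCount G u m := by
  have hs : ({w} : Set V) ⊆ {x | x ∈ m ∧ u ∈ cnbr G x} := by
    rw [Set.singleton_subset_iff]; exact ⟨hw, hc⟩
  calc 1 = ({w} : Set V).ncard := (Set.ncard_singleton w).symm
    _ ≤ _ := Set.ncard_le_ncard hs (domCount_finite G u m)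

lemma two_le_domCount (G : SimpleGraph V) {u w w' : V} {m : List V} (hne : w ≠ w')
    (hw : w ∈ m) (hc : u ∈ cnbr G w) (hw' : w' ∈ m) (hc' : u ∈ cnbr G w') :
    2 ≤ domCount G u m := by
  have := (Set.one_lt_ncard_iff (domCount_finite G u m)).2
    ⟨w, w', ⟨hw, hc⟩, ⟨hw', hc'⟩, hne⟩
  unfold domCount
  omega

lemma exists_dominator_of_ne_zero (G : SimpleGraph V) {u : V} {m : List V}
    (h : domCount G u m ≠ 0) : ∃ w ∈ m, u ∈ cnbr G w := by
  by_contra hc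
  push_neg at hc
  exact h ((domCount_eq_zero_iff G).2 hc)

lemma isLegal_nil (G : SimpleGraph V) : IsLegal G ([] : List V) :=
  ⟨List.nodup_nil, fun i => i.elim0⟩

lemma isLegal_append (G : SimpleGraph V) {m : List V} {v : V} (hm : IsLegal G m)
    (hv : v ∉ m) (hw : ∃ u ∈ cnbr G v, domCount G u m = 0) : IsLegal G (m ++ [v]) := by
  constructor
  · rw [List.nodup_append]
    exact ⟨hm.1, List.nodup_singleton v, fun a ha b hb hab => by
      rw [List.mem_singleton] at hb; subst hb; subst hab; exact hv ha⟩
  · intro i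
    have hlen : (m ++ [v]).length = m.length + 1 := by simp
    have hi : (i : ℕ) < m.length + 1 := by have := i.2; simpa using this
    rcases lt_or_eq_of_le (Nat.lt_succ_iff.1 hi) with hlt | heq
    · obtain ⟨u, hu1, hu2⟩ := hm.2 ⟨(i : ℕ), hlt⟩
      refine ⟨u, ?_, ?_⟩
      · have : (m ++ [v]).get i = m.get ⟨(i : ℕ), hlt⟩ := by
          rw [List.get_eq_getElem, List.get_eq_getElem]
          exact List.getElem_append_left hlt
        rwa [this]
      · rwa [List.take_append_of_le_length (le_of_lt hlt)]
    · refine ⟨?_, ?_, ?_⟩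
      · exact hw.choose
      · have : (m ++ [v]).get i = v := by
          rw [List.get_eq_getElem]
          exact List.getElem_concat_length heq _
        rw [this]
        exact hw.choose_spec.1
      · rw [heq, List.take_left]
        exact hw.choose_spec.2

lemma isDNS_of_append (G : SimpleGraph V) {l : List V} {v : V}
    (h : IsDNS G (l ++ [v])) : IsDNS G l := by
  refine ⟨(List.nodup_append.1 h.1).1, ?_⟩
  intro i
  have hlt : (i : ℕ) < (l ++ [v]).length := by
    have := i.2; simp
  obtain ⟨u, hu1, hu2⟩ := h.2 ⟨(i : ℕ), hlt⟩
  refine ⟨u, ?_, ?_⟩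
  · have : (l ++ [v]).get ⟨(i : ℕ), hlt⟩ = l.get i := by
      rw [List.get_eq_getElem, List.get_eq_getElem]
      exact List.getElem_append_left i.2
    rwa [this] at hu1
  · rwa [List.take_append_of_le_length (le_of_lt i.2)] at hu2

lemma isDNS_last (G : SimpleGraph V) {l : List V} {v : V}
    (h : IsDNS G (l ++ [v])) : ∃ u ∈ cnbr G v, domCount G u l ≤ 1 := by
  have hlt : l.length < (l ++ [v]).length := by simp
  obtain ⟨u, hu1, hu2⟩ := h.2 ⟨l.length, hlt⟩
  have hget : (l ++ [v]).get ⟨l.length, hlt⟩ = v := by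
    rw [List.get_eq_getElem]
    exact List.getElem_concat_length rfl _
  rw [hget] at hu1
  rw [List.take_left] at hu2
  exact ⟨u, hu1, hu2⟩

/-- Core combinatorial lemma: a DNS splits into two legal sequences. -/
lemma dns_split (G : SimpleGraph V) :
    ∀ l : List V, IsDNS G l →
    ∃ m1 m2 : List V, m1.Sublist l ∧ m2.Sublist l ∧ IsLegal G m1 ∧ IsLegal G m2 ∧
      m1.length + m2.length = l.length ∧
      ∀ w ∈ m2, ∃ l₁ l₂ : List V, l = l₁ ++ w :: l₂ ∧
        ∀ u ∈ cnbr G w, 1 ≤ domCount G u l₁ := by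
  intro l
  induction l using List.reverseRecOn with
  | nil =>
    intro _
    exact ⟨[], [], List.Sublist.refl _, List.Sublist.refl _, isLegal_nil G, isLegal_nil G,
      rfl, fun w hw => absurd hw List.not_mem_nil⟩
  | append_singleton l v ih =>
    intro h
    obtain ⟨m1, m2, s1, s2, leg1, leg2, hlen, hI2⟩ := ih (isDNS_of_append G h)
    have hvl : v ∉ l := by
      intro hv
      exact (List.nodup_append.1 h.1).2.2 v hv v (List.mem_singleton_self v) rfl
    by_cases hc : ∃ u ∈ cnbr G v, domCount G u l = 0
    · obtain ⟨u, hu, hu0⟩ := hc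
      have hv_m1 : v ∉ m1 := fun hv => hvl (s1.subset hv)
      have hu0' : domCount G u m1 = 0 := by
        have := domCount_mono G (fun w hw => s1.subset hw) u
        omega
      refine ⟨m1 ++ [v], m2, s1.append (List.Sublist.refl [v]),
        s2.trans (List.sublist_append_left l [v]),
        isLegal_append G leg1 hv_m1 ⟨u, hu, hu0'⟩, leg2, by simp; omega, ?_⟩
      intro w hw
      obtain ⟨l₁, l₂, heq, hp⟩ := hI2 w hw
      exact ⟨l₁, l₂ ++ [v], by rw [heq]; simp, hp⟩
    · push_neg at hc
      obtain ⟨u, hu, hu1⟩ := isDNS_last G h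
      have huone : domCount G u l = 1 := by
        have := hc u hu; omega
      have hv_m2 : v ∉ m2 := fun hv => hvl (s2.subset hv)
      have hm2u : domCount G u m2 = 0 := by
        by_contra h0
        obtain ⟨w, hwm, hwc⟩ := exists_dominator_of_ne_zero G h0
        obtain ⟨l₁, l₂, heq, hp⟩ := hI2 w hwm
        have h1 := hp u hwc
        obtain ⟨w', hw'm, hw'c⟩ := exists_dominator_of_ne_zero G (by omega : domCount G u l₁ ≠ 0)
        have hwl : w ∈ l := s2.subset hwm
        have hw'l : w' ∈ l := by rw [heq]; exact List.mem_append.2 (Or.inl hw'm)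
        have hne : w' ≠ w := by
          intro e
          subst e
          have hnd : l.Nodup := (isDNS_of_append G h).1
          rw [heq, List.nodup_append] at hnd
          exact hnd.2.2 w' hw'm w' List.mem_cons_self rfl
        have := two_le_domCount G hne hw'l hw'c hwl hwc
        omega
      refine ⟨m1, m2 ++ [v], s1.trans (List.sublist_append_left l [v]),
        s2.append (List.Sublist.refl [v]), leg1,
        isLegal_append G leg2 hv_m2 ⟨u, hu, hm2u⟩, by simp; omega, ?_⟩
      intro w hw
      rcases List.mem_append.1 hw with hw | hw
      · obtain ⟨l₁, l₂, heq, hp⟩ := hI2 w hw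
        exact ⟨l₁, l₂ ++ [v], by rw [heq]; simp, hp⟩
      · rw [List.mem_singleton] at hw
        subst hw
        exact ⟨l, [], rfl, fun u' hu' => by have := hc u' hu'; omega⟩

/-- Any legal sequence extends to a dominating legal sequence. -/
lemma legal_extend [Fintype V] (G : SimpleGraph V) :
    ∀ (n : ℕ) (m : List V), IsLegal G m → Fintype.card V ≤ n + m.length →
    ∃ m', IsLegal G m' ∧ (∀ v, 1 ≤ domCount G v m') ∧ m.length ≤ m'.length := by
  intro n
  induction n with
  | zero =>
    intro m hm hcard
    refine ⟨m, hm, ?_, le_rfl⟩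
    intro v
    classical
    have h1 : m.length = Fintype.card V := le_antisymm hm.1.length_le_card (by omega)
    have h2 : m.toFinset.card = Fintype.card V := by
      rw [List.toFinset_card_of_nodup hm.1]; exact h1
    have h3 : m.toFinset = Finset.univ := Finset.eq_univ_of_card _ h2
    have hvm : v ∈ m := by
      rw [← List.mem_toFinset, h3]; exact Finset.mem_univ v
    exact one_le_domCount G hvm (mem_cnbr_self G v)
  | succ n ih =>
    intro m hm hcard
    by_cases hall : ∀ v, 1 ≤ domCount G v m
    · exact ⟨m, hm, hall, le_rfl⟩
    · push_neg at hall
      obtain ⟨v, hv⟩ := hall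
      have hv0 : domCount G v m = 0 := by omega
      have hvm : v ∉ m := fun hmem => by
        have := one_le_domCount G hmem (mem_cnbr_self G v); omega
      have hm' := isLegal_append G hm hvm ⟨v, mem_cnbr_self G v, hv0⟩
      obtain ⟨m', a, b, c⟩ := ih (m ++ [v]) hm' (by simp; omega)
      refine ⟨m', a, b, ?_⟩
      have : (m ++ [v]).length = m.length + 1 := by simp
      omega

/-- γ_{gr}^{×2}(G) ≤ 2·γ_{gr}(G). -/
theorem stmt3 [Fintype V] (G : SimpleGraph V)
    (hiso : ∀ v : V, ∃ u, G.Adj v u) :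
    gddn G ≤ 2 * grundy G := by
  have hb : BddAbove {n | ∃ l : List V, IsDomSeq G l ∧ l.length = n} := by
    refine ⟨Fintype.card V, ?_⟩
    rintro n ⟨l, hl, rfl⟩
    exact hl.1.1.length_le_card
  apply csSup_le'
  rintro n ⟨l, ⟨hDNS, _⟩, rfl⟩
  obtain ⟨m1, m2, s1, s2, leg1, leg2, hlen, -⟩ := dns_split G l hDNS
  have hex : ∃ m, IsLegal G m ∧ l.length ≤ 2 * m.length := by
    rcases le_total m1.length m2.length with hle | hle
    · exact ⟨m2, leg2, by omega⟩
    · exact ⟨m1, leg1, by omega⟩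
  obtain ⟨m, legm, hlm⟩ := hex
  obtain ⟨m', legm', hdom, hlen'⟩ := legal_extend G (Fintype.card V) m legm (by omega)
  have hmem : m'.length ∈ {n | ∃ l : List V, IsDomSeq G l ∧ l.length = n} :=
    ⟨m', ⟨legm', hdom⟩, rfl⟩
  have hle := le_csSup hb hmem
  have : l.length ≤ 2 * m'.length := by omega
  calc l.length ≤ 2 * m'.length := this
    _ ≤ 2 * grundy G := Nat.mul_le_mul_left 2 hle
end

section
/- Let v and v' be false twin vertices of a graph G (N(v) = N(v'), v ≠ v'). Then ρ(G − v') ≤ ρ(G) ≤ ρ(G − v') + 1, where ρ denotes the maximum double neighborhood number. -/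
open SimpleGraph

variable {V : Type*}

lemma mem_cnbr {G : SimpleGraph V} {u w : V} : u ∈ cnbr G w ↔ u = w ∨ G.Adj w u := by
  simp [cnbr]

lemma adj_twin {G : SimpleGraph V} {s t : V} (hN : G.neighborSet s = G.neighborSet t)
    (x : V) : G.Adj x s ↔ G.Adj x t := by
  rw [G.adj_comm, ← SimpleGraph.mem_neighborSet, hN, SimpleGraph.mem_neighborSet, G.adj_comm]

lemma domCount_le_of_subset [Finite V] (G : SimpleGraph V) (u : V) {l₁ l₂ : List V}
    (h : ∀ x ∈ l₁, x ∈ l₂) : domCount G u l₁ ≤ domCount G u l₂ :=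
  Set.ncard_le_ncard (fun x hx => ⟨h x hx.1, hx.2⟩) (Set.toFinite _)

lemma domCount_twin_eq (G : SimpleGraph V) {s t : V}
    (hN : G.neighborSet s = G.neighborSet t) {Q : List V}
    (hs : s ∉ Q) (ht : t ∉ Q) : domCount G s Q = domCount G t Q := by
  unfold domCount
  congr 1
  ext x
  simp only [Set.mem_setOf_eq, mem_cnbr]
  constructor
  · rintro ⟨hxQ, (h | h)⟩
    · exact absurd (h ▸ hxQ) hs
    · exact ⟨hxQ, Or.inr ((adj_twin hN x).1 h)⟩
  · rintro ⟨hxQ, (h | h)⟩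
    · exact absurd (h ▸ hxQ) ht
    · exact ⟨hxQ, Or.inr ((adj_twin hN x).2 h)⟩

lemma wit1 [Finite V] (G : SimpleGraph V) {s t : V}
    (hN : G.neighborSet s = G.neighborSet t) {Q : List V} {w : V}
    (hsQ : s ∉ Q) (htQ : t ∉ Q) (hw : w ≠ t) (hwc : t ∈ cnbr G w)
    (h1 : domCount G t Q ≤ 1) : s ∈ cnbr G w ∧ domCount G s Q ≤ 1 := by
  constructor
  · rcases mem_cnbr.1 hwc with h | h
    · exact absurd h.symm hw
    · exact mem_cnbr.2 (Or.inr ((adj_twin hN w).2 h))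
  · rw [domCount_twin_eq G hN hsQ htQ]; exact h1

lemma wit2 [Finite V] (G : SimpleGraph V) {s t : V}
    (hN : G.neighborSet s = G.neighborSet t) {Q Q' : List V} {w : V}
    (hQ : ∀ x ∈ Q', x ∈ Q) (htQ' : t ∉ Q') (ht : t ∈ Q) (hw : w ≠ t)
    (hwc : t ∈ cnbr G w) (h1 : domCount G t Q ≤ 1) :
    s ∈ cnbr G w ∧ domCount G s Q' ≤ 1 := by
  constructor
  · rcases mem_cnbr.1 hwc with h | h
    · exact absurd h.symm hw
    · exact mem_cnbr.2 (Or.inr ((adj_twin hN w).2 h))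
  · have hsub : {x | x ∈ Q' ∧ s ∈ cnbr G x} ⊆ {s} := by
      rintro x ⟨hx, hc⟩
      rcases mem_cnbr.1 hc with h | h
      · exact Set.mem_singleton_iff.2 h.symm
      · have h2 := (Set.ncard_le_one (Set.toFinite _)).1 h1 x
          ⟨hQ x hx, mem_cnbr.2 (Or.inr ((adj_twin hN x).1 h))⟩ t
          ⟨ht, mem_cnbr.2 (Or.inl rfl)⟩
        exact absurd (h2 ▸ hx) htQ'
    exact le_trans (Set.ncard_le_ncard hsub (Set.finite_singleton s)) (by simp)

lemma erase_good [Finite V] (G : SimpleGraph V) (s t : V) (hst : s ≠ t)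
    (hN : G.neighborSet s = G.neighborSet t) (l : List V) (hl : IsDNS G l)
    (H : ∀ i : ℕ, s ∈ l.take i → t ∈ l.take i) :
    ∃ m : List V, m.Nodup ∧ t ∉ m ∧ l.length ≤ m.length + 1 ∧
      ∀ (i : ℕ) (hi : i < m.length), ∃ u, u ≠ t ∧ u ∈ cnbr G m[i] ∧
        domCount G u (m.take i) ≤ 1 := by
  classical
  by_cases htl : t ∈ l
  · obtain ⟨A, B, rfl⟩ := List.append_of_mem htl
    have hnd := hl.1
    rw [List.nodup_append] at hnd
    obtain ⟨hA, hB', hdisj⟩ := hnd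
    have htA : t ∉ A := fun h => hdisj t h t List.mem_cons_self rfl
    have htB : t ∉ B := (List.nodup_cons.1 hB').1
    have hBnd : B.Nodup := (List.nodup_cons.1 hB').2
    refine ⟨A ++ B, ?_, ?_, ?_, ?_⟩
    · rw [List.nodup_append]
      exact ⟨hA, hBnd, fun x hx y hy => hdisj x hx y (List.mem_cons_of_mem _ hy)⟩
    · simp only [List.mem_append]
      rintro (h | h)
      exacts [htA h, htB h]
    · simp only [List.length_append, List.length_cons]
      omega
    · intro i hi
      rw [List.length_append] at hi
      by_cases hiA : i < A.length
      · -- index falls in A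
        have hlen : i < (A ++ t :: B).length := by
          simp only [List.length_append, List.length_cons]; omega
        have hget : (A ++ B)[i]'(by simp only [List.length_append]; omega)
            = (A ++ t :: B)[i]'hlen := by
          rw [List.getElem_append_left hiA, List.getElem_append_left hiA]
        have htake : (A ++ B).take i = A.take i := by
          rw [List.take_append, Nat.sub_eq_zero_of_le hiA.le,
            List.take_zero, List.append_nil]
        have htakel : (A ++ t :: B).take i = A.take i := by
          rw [List.take_append, Nat.sub_eq_zero_of_le hiA.le,
            List.take_zero, List.append_nil]
        obtain ⟨u, hu1, hu2⟩ := hl.2 ⟨i, hlen⟩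
        simp only [List.get_eq_getElem] at hu1 hu2
        rw [htakel] at hu2
        by_cases hut : u = t
        · subst hut
        -- witness is t: replace by s
          have htQ : u ∉ A.take i := fun h => htA (List.mem_of_mem_take h)
          have hsQ : s ∉ A.take i := fun h => by
            have := H i (by rw [htakel]; exact h)
            rw [htakel] at this
            exact htQ this
          have hwA : (A ++ B)[i]'(by simp only [List.length_append]; omega) ∈ A := by
            rw [List.getElem_append_left hiA]
            exact List.getElem_mem _
          have hw : (A ++ B)[i]'(by simp only [List.length_append]; omega) ≠ u :=
            fun h => htA (h ▸ hwA)
          obtain ⟨hc, hd⟩ := wit1 G hN hsQ htQ hw (by rw [hget]; exact hu1) hu2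
          exact ⟨s, hst, hc, by rw [htake]; exact hd⟩
        · exact ⟨u, hut, by rw [hget]; exact hu1, by rw [htake]; exact hu2⟩
      · -- index falls in B
        have hAi : A.length ≤ i := le_of_not_gt hiA
        have hlen1 : i + 1 < (A ++ t :: B).length := by
          simp only [List.length_append, List.length_cons]; omega
        have hget : (A ++ B)[i]'(by simp only [List.length_append]; omega)
            = (A ++ t :: B)[i+1]'hlen1 := by
          rw [List.getElem_append_right hAi, List.getElem_append_right (by omega : A.length ≤ i + 1)]
          have h' : i + 1 - A.length = (i - A.length) + 1 := by omega
          simp only [h', List.getElem_cons_succ]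
        have htakem : (A ++ B).take i = A ++ B.take (i - A.length) := by
          rw [List.take_append, List.take_of_length_le hAi]
        have htakel : (A ++ t :: B).take (i + 1) = A ++ t :: B.take (i - A.length) := by
          rw [List.take_append, List.take_of_length_le (by omega : A.length ≤ i + 1)]
          congr 1
          have h' : i + 1 - A.length = (i - A.length) + 1 := by omega
          rw [h', List.take_succ_cons]
        have hsub : ∀ x ∈ (A ++ B).take i, x ∈ (A ++ t :: B).take (i + 1) := by
          rw [htakem, htakel]
          intro x hx
          simp only [List.mem_append, List.mem_cons] at hx ⊢
          tauto
        obtain ⟨u, hu1, hu2⟩ := hl.2 ⟨i + 1, hlen1⟩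
        simp only [List.get_eq_getElem] at hu1 hu2
        by_cases hut : u = t
        · subst hut
          have htQ' : u ∉ (A ++ B).take i := by
            rw [htakem]
            simp only [List.mem_append]
            rintro (h | h)
            exacts [htA h, htB (List.mem_of_mem_take h)]
          have htQ : u ∈ (A ++ u :: B).take (i + 1) := by
            rw [htakel]
            simp only [List.mem_append, List.mem_cons]
            tauto
          have hwB : (A ++ B)[i]'(by simp only [List.length_append]; omega) ∈ B := by
            rw [List.getElem_append_right hAi]
            exact List.getElem_mem _
          have hw : (A ++ B)[i]'(by simp only [List.length_append]; omega) ≠ u :=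
            fun h => htB (h ▸ hwB)
          obtain ⟨hc, hd⟩ := wit2 G hN hsub htQ' htQ hw (by rw [hget]; exact hu1) hu2
          exact ⟨s, hst, hc, hd⟩
        · refine ⟨u, hut, by rw [hget]; exact hu1, ?_⟩
          exact le_trans (domCount_le_of_subset G u hsub) hu2
  · -- t ∉ l : keep l itself
    refine ⟨l, hl.1, htl, Nat.le_succ _, ?_⟩
    intro i hi
    obtain ⟨u, hu1, hu2⟩ := hl.2 ⟨i, hi⟩
    simp only [List.get_eq_getElem] at hu1 hu2
    by_cases hut : u = t
    · subst hut
      have htQ : u ∉ l.take i := fun h => htl (List.mem_of_mem_take h)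
      have hsQ : s ∉ l.take i := fun h => htQ (H i h)
      have hw : l[i] ≠ u := fun h => htl (h ▸ List.getElem_mem _)
      obtain ⟨hc, hd⟩ := wit1 G hN hsQ htQ hw hu1 hu2
      exact ⟨s, hst, hc, hd⟩
    · exact ⟨u, hut, hu1, hu2⟩

lemma swap_isDNS [DecidableEq V] (G : SimpleGraph V) (v v' : V) (_hne : v ≠ v')
    (hN : G.neighborSet v = G.neighborSet v') {l : List V} (hl : IsDNS G l) :
    IsDNS G (l.map (Equiv.swap v v')) := by
  set σ := Equiv.swap v v' with hσ
  have hA : ∀ x, G.Adj v x ↔ G.Adj v' x := by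
    intro x
    rw [G.adj_comm, adj_twin hN x, G.adj_comm]
  have hvv' : ¬ G.Adj v v' := fun h => G.irrefl ((hA v').1 h)
  have key : ∀ a b, G.Adj a b → G.Adj (σ a) (σ b) := by
    intro a b hab
    rcases eq_or_ne a v with h | hav
    · rw [h] at hab ⊢
      have hb1 : b ≠ v := fun h => G.irrefl (h ▸ hab)
      have hb2 : b ≠ v' := fun h => hvv' (h ▸ hab)
      rw [hσ, Equiv.swap_apply_left, Equiv.swap_apply_of_ne_of_ne hb1 hb2]
      exact (hA b).1 hab
    rcases eq_or_ne a v' with h | hav'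
    · rw [h] at hab ⊢
      have hb1 : b ≠ v := fun h => hvv' (G.adj_symm (h ▸ hab))
      have hb2 : b ≠ v' := fun h => G.irrefl (h ▸ hab)
      rw [hσ, Equiv.swap_apply_right, Equiv.swap_apply_of_ne_of_ne hb1 hb2]
      exact (hA b).2 hab
    · rw [hσ, Equiv.swap_apply_of_ne_of_ne hav hav']
      rcases eq_or_ne b v with h | hbv
      · rw [h] at hab ⊢
        rw [Equiv.swap_apply_left]
        exact (adj_twin hN a).1 hab
      rcases eq_or_ne b v' with h | hbv'
      · rw [h] at hab ⊢
        rw [Equiv.swap_apply_right]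
        exact (adj_twin hN a).2 hab
      · rw [Equiv.swap_apply_of_ne_of_ne hbv hbv']
        exact hab
  have hadj : ∀ a b, G.Adj (σ a) (σ b) ↔ G.Adj a b := by
    intro a b
    refine ⟨fun h => ?_, key a b⟩
    have := key _ _ h
    simpa [hσ, Equiv.swap_apply_self] using this
  have hcn : ∀ u x : V, σ u ∈ cnbr G (σ x) ↔ u ∈ cnbr G x := by
    intro u x
    rw [mem_cnbr, mem_cnbr, hadj, EmbeddingLike.apply_eq_iff_eq]
  have hdc : ∀ (u : V) (Q : List V), domCount G (σ u) (Q.map σ) = domCount G u Q := by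
    intro u Q
    unfold domCount
    rw [show {w | w ∈ Q.map σ ∧ σ u ∈ cnbr G w} = σ '' {w | w ∈ Q ∧ u ∈ cnbr G w} by
      ext w
      simp only [Set.mem_image, Set.mem_setOf_eq, List.mem_map]
      constructor
      · rintro ⟨⟨x, hx, rfl⟩, h2⟩
        exact ⟨x, ⟨hx, (hcn u x).1 h2⟩, rfl⟩
      · rintro ⟨x, ⟨hx, h2⟩, rfl⟩
        exact ⟨⟨x, hx, rfl⟩, (hcn u x).2 h2⟩]
    exact Set.ncard_image_of_injective _ σ.injective
  refine ⟨hl.1.map σ.injective, ?_⟩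
  intro i
  have hi : (i : ℕ) < l.length := by simpa using i.2
  obtain ⟨u, hu1, hu2⟩ := hl.2 ⟨i, hi⟩
  simp only [List.get_eq_getElem] at hu1 hu2 ⊢
  refine ⟨σ u, ?_, ?_⟩
  · rw [List.getElem_map]
    exact (hcn u _).2 hu1
  · rw [← List.map_take, hdc]
    exact hu2

-- induced subgraph transfer
lemma cnbr_induce (G : SimpleGraph V) {s : Set V} (u w : ↥s) :
    u ∈ cnbr (G.induce s) w ↔ (u : V) ∈ cnbr G (w : V) := by
  rw [mem_cnbr, mem_cnbr]
  simp only [SimpleGraph.induce, SimpleGraph.comap_adj, Function.Embedding.coe_subtype,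
    Subtype.ext_iff]

lemma domCount_induce (G : SimpleGraph V) {s : Set V} (u : ↥s) (m' : List ↥s) :
    domCount (G.induce s) u m' = domCount G (u : V) (m'.map Subtype.val) := by
  unfold domCount
  rw [← Set.ncard_image_of_injective {w | w ∈ m' ∧ u ∈ cnbr (G.induce s) w}
    Subtype.val_injective]
  congr 1
  ext w
  simp only [Set.mem_image, Set.mem_setOf_eq, List.mem_map]
  constructor
  · rintro ⟨x, ⟨hx, hc⟩, rfl⟩
    exact ⟨⟨x, hx, rfl⟩, (cnbr_induce G u x).1 hc⟩
  · rintro ⟨⟨x, hx, rfl⟩, hc⟩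
    exact ⟨x, ⟨hx, (cnbr_induce G u x).2 hc⟩, rfl⟩

lemma isDNS_map_val (G : SimpleGraph V) {s : Set V} {l' : List ↥s}
    (h : IsDNS (G.induce s) l') : IsDNS G (l'.map Subtype.val) := by
  refine ⟨h.1.map Subtype.val_injective, ?_⟩
  intro i
  have hi : (i : ℕ) < l'.length := by simpa using i.2
  obtain ⟨u, hu1, hu2⟩ := h.2 ⟨i, hi⟩
  simp only [List.get_eq_getElem] at hu1 hu2 ⊢
  refine ⟨(u : V), ?_, ?_⟩
  · rw [List.getElem_map]
    exact (cnbr_induce G u _).1 hu1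
  · rw [← List.map_take, ← domCount_induce]
    exact hu2

lemma isDNS_nil (G : SimpleGraph V) : IsDNS G [] :=
  ⟨List.nodup_nil, fun i => absurd i.isLt (by simp)⟩

lemma mdnn_bdd [Finite V] (G : SimpleGraph V) :
    BddAbove {n | ∃ l : List V, IsDNS G l ∧ l.length = n} := by
  haveI := Fintype.ofFinite V
  exact ⟨Fintype.card V, fun n ⟨l, hl, hn⟩ => hn ▸ hl.1.length_le_card⟩

lemma length_le_mdnn [Finite V] {G : SimpleGraph V} {l : List V} (hl : IsDNS G l) :
    l.length ≤ mdnn G :=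
  le_csSup (mdnn_bdd G) ⟨l, hl, rfl⟩

lemma exists_mdnn [Finite V] (G : SimpleGraph V) :
    ∃ l : List V, IsDNS G l ∧ l.length = mdnn G := by
  have h0 : (0 : ℕ) ∈ {n | ∃ l : List V, IsDNS G l ∧ l.length = n} :=
    ⟨[], isDNS_nil G, rfl⟩
  exact Nat.sSup_mem ⟨0, h0⟩ (mdnn_bdd G)

lemma mem_take_mono {l : List V} {a : V} {m n : ℕ} (h : m ≤ n) (ha : a ∈ l.take m) :
    a ∈ l.take n := by
  have : l.take m = (l.take n).take m := by rw [List.take_take, min_eq_left h]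
  rw [this] at ha
  exact List.mem_of_mem_take ha


/-- removing one of a pair of false twins decreases ρ by at most 1. -/
theorem stmt16 [Fintype V] (G : SimpleGraph V) (v v' : V) (hne : v ≠ v')
    (htwin : G.neighborSet v = G.neighborSet v') :
    mdnn (G.induce {u : V | u ≠ v'}) ≤ mdnn G ∧
    mdnn G ≤ mdnn (G.induce {u : V | u ≠ v'}) + 1 := by
  haveI := Classical.decEq V
  constructor
  · refine csSup_le ⟨0, ⟨[], isDNS_nil _, rfl⟩⟩ ?_
    rintro n ⟨l', hl', rfl⟩
    have h := length_le_mdnn (isDNS_map_val G hl')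
    simpa using h
  · obtain ⟨l, hl, hlen⟩ := exists_mdnn G
    obtain ⟨l₁, hl₁, hlen₁, H₁⟩ :
        ∃ l₁ : List V, IsDNS G l₁ ∧ l₁.length = l.length ∧
          ∀ i : ℕ, v ∈ l₁.take i → v' ∈ l₁.take i := by
      by_cases hH : ∀ i : ℕ, v ∈ l.take i → v' ∈ l.take i
      · exact ⟨l, hl, rfl, hH⟩
      · push_neg at hH
        obtain ⟨i₀, hvi, hv'i⟩ := hH
        refine ⟨l.map (Equiv.swap v v'), swap_isDNS G v v' hne htwin hl,
          List.length_map _, ?_⟩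
        intro j hj
        rw [← List.map_take] at hj ⊢
        have hv'j : v' ∈ l.take j := by
          obtain ⟨x, hx, hxe⟩ := List.mem_map.1 hj
          have hx' : x = v' := by
            apply (Equiv.swap v v').injective
            rw [hxe, Equiv.swap_apply_right]
          rwa [hx'] at hx
        have hij : i₀ ≤ j := by
          by_contra hc
          exact hv'i (mem_take_mono (le_of_not_ge hc) hv'j)
        have hvj : v ∈ l.take j := mem_take_mono hij hvi
        exact List.mem_map.2 ⟨v, hvj, Equiv.swap_apply_left v v'⟩
    obtain ⟨m, hmnd, hmt, hmlen, hm⟩ := erase_good G v v' hne htwin l₁ hl₁ H₁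
    have hmem : ∀ x ∈ m, x ∈ {u : V | u ≠ v'} := fun x hx h => hmt (h ▸ hx)
    set m' : List ↥{u : V | u ≠ v'} := m.pmap (fun x h => ⟨x, h⟩) hmem with hm'
    have hmap : m'.map Subtype.val = m := by
      rw [hm', List.map_pmap]
      exact (List.pmap_eq_map (f := id) hmem).trans (List.map_id m)
    have hlen' : m'.length = m.length := by rw [hm', List.length_pmap]
    have hdns : IsDNS (G.induce {u : V | u ≠ v'}) m' := by
      constructor
      · have hnd : (m'.map Subtype.val).Nodup := hmap ▸ hmnd
        exact List.Nodup.of_map _ hnd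
      · intro i
        have hi : (i : ℕ) < m.length := by rw [← hlen']; exact i.isLt
        obtain ⟨u, hut, huc, hud⟩ := hm i hi
        have hval : ((m'.get i : ↥{u : V | u ≠ v'}) : V) = m[(i : ℕ)]'hi := by
          simp only [List.get_eq_getElem]
          have h2 : (m'.map Subtype.val)[(i : ℕ)]'(by rw [List.length_map]; exact i.isLt)
              = ((m'[(i : ℕ)]'i.isLt : ↥{u : V | u ≠ v'}) : V) := List.getElem_map _
          rw [← h2]
          exact List.getElem_of_eq hmap _
        refine ⟨⟨u, hut⟩, ?_, ?_⟩
        · rw [cnbr_induce]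
          show u ∈ cnbr G ((m'.get i : ↥{u : V | u ≠ v'}) : V)
          rw [hval]
          exact huc
        · rw [domCount_induce, List.map_take, hmap]
          exact hud
    have h1 : m'.length ≤ mdnn (G.induce {u : V | u ≠ v'}) := length_le_mdnn hdns
    calc mdnn G = l.length := hlen.symm
    _ = l₁.length := hlen₁.symm
    _ ≤ m.length + 1 := hmlen
    _ = m'.length + 1 := by rw [hlen']
    _ ≤ mdnn (G.induce {u : V | u ≠ v'}) + 1 := Nat.add_le_add_right h1 1
end
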